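/- arXiv:0804.0038 — 2 statements merged into one kernel-verified Lean document; each statement's English description precedes it below -/
import Mathlib

section
/- Let d ≥ 2 be an integer, ℓ := lcm(1, …, d), and fix an integer i with 1 ≤ i ≤ d; set ℓ_i := ℓ/i. Let r ≥ 1 and let Φ be an r × r matrix with entries in k̄[t] such that det Φ(θ^{q^{−ih}}) ≠ 0 for every integer h ≥ 1. Then the matrix Φ' := Φ^{(−i(ℓ_i−1))} · Φ^{(−i(ℓ_i−2))} ⋯ Φ^{(−i)} · Φ satisfies det Φ'(θ^{q^{−ℓj}}) ≠ 0 for every integer j ≥ 1; moreover, if det Φ(0) ≠ 0 then det Φ'(0) ≠ 0. -/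
/-!
Setup: `p` a prime, `q = p^e` a power of `p`, and `k̄` an algebraic closure of the rational
function field `𝔽_q(θ)`.  Since `k̄` is perfect, the `q`-power Frobenius is an automorphism
`σ` of `k̄`, and for `m : ℤ` the map `σ^m` sends `x` to `x^{q^m}` (using the inverse of the
Frobenius automorphism when `m < 0`).  For `f ∈ k̄[t]` and `m : ℤ`, `f^{(m)}` is obtained by
applying `σ^m` to each coefficient of `f`, and this operation is applied entrywise to
matrices over `k̄[t]`.
-/

noncomputable section

/-- `k̄`, an algebraic closure of `𝔽_q(θ)` with `q = p^e`. -/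
abbrev Kbar (p e : ℕ) [Fact p.Prime] : Type := AlgebraicClosure (RatFunc (GaloisField p e))

instance (p e : ℕ) [Fact p.Prime] : CharP (RatFunc (GaloisField p e)) p :=
  charP_of_injective_ringHom
    ((algebraMap (Polynomial (GaloisField p e)) (RatFunc (GaloisField p e))).comp
      Polynomial.C).injective p

/-- The `q`-power Frobenius automorphism `σ : x ↦ x^q` of `k̄`, `q = p^e`. -/
def frobQ (p e : ℕ) [Fact p.Prime] : RingAut (Kbar p e) := (frobeniusEquiv (Kbar p e) p) ^ e

/-- `θ ∈ k̄`, the image of the variable of `𝔽_q(θ)`. -/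
def thetaKbar (p e : ℕ) [Fact p.Prime] : Kbar p e :=
  algebraMap (RatFunc (GaloisField p e)) (Kbar p e) RatFunc.X

/-- The `m`-fold coefficientwise Frobenius twist `f ↦ f^{(m)}` on `k̄[t]`, for `m : ℤ`. -/
def polyTwist (p e : ℕ) [Fact p.Prime] (m : ℤ) :
    Polynomial (Kbar p e) →+* Polynomial (Kbar p e) :=
  Polynomial.mapRingHom ((frobQ p e ^ m : RingAut (Kbar p e)) : Kbar p e →+* Kbar p e)

/-- Let `d ≥ 2`, `ℓ := lcm(1, …, d)`, `1 ≤ i ≤ d`, `ℓ_i := ℓ/i`.  Let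
`Φ` be an `r × r` matrix over `k̄[t]` with `det Φ(θ^{q^{−ih}}) ≠ 0` for every `h ≥ 1`.  Then
`Φ' := Φ^{(−i(ℓ_i−1))} ⋯ Φ^{(−i)} · Φ` satisfies `det Φ'(θ^{q^{−ℓj}}) ≠ 0` for every
`j ≥ 1`; moreover, if `det Φ(0) ≠ 0` then `det Φ'(0) ≠ 0`. -/
theorem uniformize_frobenius_twists (p e : ℕ) [Fact p.Prime] (he : 0 < e)
    (d : ℕ) (hd : 2 ≤ d) (i : ℕ) (hi : 1 ≤ i) (hid : i ≤ d) (r : ℕ) (hr : 1 ≤ r)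
    (Φ : Matrix (Fin r) (Fin r) (Polynomial (Kbar p e)))
    (hΦ : ∀ h : ℕ, 1 ≤ h →
      Polynomial.eval ((frobQ p e ^ (-(i * h : ℤ))) (thetaKbar p e)) Φ.det ≠ 0) :
    ∀ ℓ ℓi : ℕ, ℓ = (Finset.Icc 1 d).lcm id → ℓi = ℓ / i →
    ∀ Φ' : Matrix (Fin r) (Fin r) (Polynomial (Kbar p e)),
      Φ' = ((List.range ℓi).map
        (fun j => Φ.map (polyTwist p e (-(i * (ℓi - 1 - j) : ℤ))))).prod →
    (∀ j : ℕ, 1 ≤ j →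
        Polynomial.eval ((frobQ p e ^ (-(ℓ * j : ℤ))) (thetaKbar p e)) Φ'.det ≠ 0) ∧
      (Polynomial.eval 0 Φ.det ≠ 0 → Polynomial.eval 0 Φ'.det ≠ 0) := by
  classical
  intro ℓ ℓi hℓ hℓi Φ' hΦ'
  have hidvd : i ∣ ℓ := by
    subst hℓ
    exact Finset.dvd_lcm (α := ℕ) (f := id) (by simp [Finset.mem_Icc]; omega)
  have hℓeq : (ℓ : ℤ) = (i : ℤ) * (ℓi : ℤ) := by
    subst hℓi
    exact_mod_cast (Nat.mul_div_cancel' hidvd).symm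
  have hcomp : ∀ (m n : ℤ) (x : Kbar p e),
      (frobQ p e ^ m) ((frobQ p e ^ n) x) = (frobQ p e ^ (m + n)) x := by
    intro m n x
    rw [zpow_add]
    rfl
  -- rewrite Φ' as a product over a ℕ-indexed list
  have hΦ'2 : Φ' = ((List.range ℓi).map
      (fun a : ℕ => Φ.map (polyTwist p e (-(i * ((ℓi : ℤ) - 1 - a)))))).prod := by
    rw [hΦ']
    congr 1
    rw [show (do let a ← List.range ℓi; pure ((a : ℤ)) : List ℤ)
        = (List.range ℓi).map (fun a : ℕ => (a : ℤ)) from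
          List.map_eq_flatMap.symm, List.map_map]
    rfl
  -- determinant of Φ' as a product
  have hdet : Φ'.det = ((List.range ℓi).map
      (fun a : ℕ => Φ.det.map
        ((frobQ p e ^ (-(i * ((ℓi : ℤ) - 1 - a))) : RingAut (Kbar p e)) :
          Kbar p e →+* Kbar p e))).prod := by
    rw [hΦ'2, ← Matrix.coe_detMonoidHom, map_list_prod, List.map_map]
    congr 1
    refine List.map_congr_left fun a _ => ?_
    show ((polyTwist p e (-(i * ((ℓi : ℤ) - 1 - a)))).mapMatrix Φ).det = _
    rw [← RingHom.map_det]
    rfl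
  -- evaluation of a twisted polynomial at a twisted point
  have hevalt : ∀ (m A : ℤ),
      Polynomial.eval ((frobQ p e ^ A) (thetaKbar p e))
        (Φ.det.map ((frobQ p e ^ m : RingAut (Kbar p e)) : Kbar p e →+* Kbar p e))
      = (frobQ p e ^ m)
          (Polynomial.eval ((frobQ p e ^ (A - m)) (thetaKbar p e)) Φ.det) := by
    intro m A
    rw [Polynomial.eval_map]
    have hx : (frobQ p e ^ A) (thetaKbar p e)
        = ((frobQ p e ^ m : RingAut (Kbar p e)) : Kbar p e →+* Kbar p e)
            ((frobQ p e ^ (A - m)) (thetaKbar p e)) := by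
      show _ = (frobQ p e ^ m) ((frobQ p e ^ (A - m)) (thetaKbar p e))
      rw [hcomp]
      ring_nf
    rw [hx, Polynomial.eval₂_hom]
    rfl
  -- evaluation of a twisted polynomial at 0
  have heval0 : ∀ m : ℤ,
      Polynomial.eval 0
        (Φ.det.map ((frobQ p e ^ m : RingAut (Kbar p e)) : Kbar p e →+* Kbar p e))
      = (frobQ p e ^ m) (Polynomial.eval 0 Φ.det) := by
    intro m
    rw [Polynomial.eval_map]
    conv_lhs => rw [show (0 : Kbar p e)
      = ((frobQ p e ^ m : RingAut (Kbar p e)) : Kbar p e →+* Kbar p e) 0 by rw [map_zero]]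
    rw [Polynomial.eval₂_hom]
    rfl
  have hinj : ∀ m : ℤ, Function.Injective (frobQ p e ^ m : RingAut (Kbar p e)) := fun m =>
    (frobQ p e ^ m).injective
  constructor
  · intro j hj
    rw [hdet, Polynomial.eval_list_prod, List.map_map]
    apply List.prod_ne_zero
    intro h0
    simp only [List.mem_map, List.mem_range, Function.comp] at h0
    obtain ⟨a, ha, hval⟩ := h0
    rw [hevalt] at hval
    obtain ⟨j₀, rfl⟩ := Nat.exists_eq_add_of_le hj
    have harith : (-((ℓ : ℤ) * ((1 + j₀ : ℕ) : ℤ))) - (-(i * ((ℓi : ℤ) - 1 - a)))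
        = -(i * ((ℓi * j₀ + a + 1 : ℕ) : ℤ)) := by
      rw [hℓeq]
      push_cast
      ring
    rw [harith] at hval
    have hX : Polynomial.eval
        ((frobQ p e ^ (-(i * ((ℓi * j₀ + a + 1 : ℕ) : ℤ)))) (thetaKbar p e)) Φ.det = 0 := by
      apply hinj (-(i * ((ℓi : ℤ) - 1 - a)))
      rw [map_zero]
      exact hval
    exact hΦ (ℓi * j₀ + a + 1) (by omega) hX
  · intro hΦ0
    rw [hdet, Polynomial.eval_list_prod, List.map_map]
    apply List.prod_ne_zero
    intro h0
    simp only [List.mem_map, List.mem_range, Function.comp] at h0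
    obtain ⟨a, _, hval⟩ := h0
    rw [heval0] at hval
    apply hΦ0
    apply hinj (-(i * ((ℓi : ℤ) - 1 - a)))
    rw [map_zero]
    exact hval
end
end

section
/- In the formal power series ring 𝔽_p(θ)[[z]], the Carlitz exponential satisfies the functional equation exp_{C_r}(θ·z) = θ·exp_{C_r}(z) + (exp_{C_r}(z))^{p^r}, where exp_{C_r}(θ·z) denotes the power series obtained from exp_{C_r}(z) by substituting θ·z for z. -/
/-!
Setup: `p` a prime, `r` a positive integer, `k := 𝔽_p(θ)` the field of rational functions
in `θ` over `𝔽_p` (realized as `RatFunc (ZMod p)` with `θ := X`).  With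
`D_{r0} := 1` and `D_{ri} := ∏_{j=0}^{i−1} (θ^{p^{ri}} − θ^{p^{rj}})`, the Carlitz
exponential is the formal power series `exp_{C_r}(z) := Σ_{i=0}^∞ z^{p^{ri}}/D_{ri} ∈ k[[z]]`.
-/

noncomputable section

open scoped Classical

/-- `k := 𝔽_p(θ)`. -/
abbrev kRat (p : ℕ) [Fact p.Prime] : Type := RatFunc (ZMod p)

/-- `θ`, the variable of `k = 𝔽_p(θ)`. -/
def thetaRat (p : ℕ) [Fact p.Prime] : kRat p := RatFunc.X

/-- `D_{r0} := 1`, `D_{ri} := ∏_{j=0}^{i−1} (θ^{p^{ri}} − θ^{p^{rj}})`. -/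
def carlitzD (p : ℕ) [Fact p.Prime] (r i : ℕ) : kRat p :=
  ∏ j ∈ Finset.range i, (thetaRat p ^ p ^ (r * i) - thetaRat p ^ p ^ (r * j))

/-- The Carlitz exponential `exp_{C_r}(z) := Σ_{i=0}^∞ z^{p^{ri}}/D_{ri} ∈ k[[z]]`: its
coefficient of `z^j` is `1/D_{ri}` when `j = p^{ri}`, and `0` otherwise. -/
def carlitzExp (p : ℕ) [Fact p.Prime] (r : ℕ) : PowerSeries (kRat p) :=
  PowerSeries.mk fun j => if h : ∃ i, p ^ (r * i) = j then (carlitzD p r h.choose)⁻¹ else 0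

instance instCharPkRat (p : ℕ) [Fact p.Prime] : CharP (kRat p) p :=
  charP_of_injective_algebraMap (algebraMap (ZMod p) (RatFunc (ZMod p))).injective p

lemma coeff_pow_agree {R : Type*} [CommSemiring R] (f g : PowerSeries R) (n : ℕ)
    (h : ∀ m ≤ n, PowerSeries.coeff (R := R) m f = PowerSeries.coeff (R := R) m g) (k : ℕ) :
    ∀ m ≤ n, PowerSeries.coeff (R := R) m (f ^ k) = PowerSeries.coeff (R := R) m (g ^ k) := by
  induction k with
  | zero => intro m _; simp
  | succ k ih =>
    intro m hm
    rw [pow_succ, pow_succ, PowerSeries.coeff_mul, PowerSeries.coeff_mul]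
    refine Finset.sum_congr rfl fun q hq => ?_
    rw [Finset.HasAntidiagonal.mem_antidiagonal] at hq
    have h1 : q.1 ≤ n := le_trans (by omega) hm
    have h2 : q.2 ≤ n := le_trans (by omega) hm
    rw [ih q.1 h1, h q.2 h2]

lemma coeff_pow_char {R : Type*} [CommRing R] (p : ℕ) [Fact p.Prime] [CharP R p]
    (f : PowerSeries R) (n : ℕ) :
    PowerSeries.coeff (R := R) n (f ^ p) =
      if p ∣ n then (PowerSeries.coeff (R := R) (n / p) f) ^ p else 0 := by
  have hp : 0 < p := (Fact.out : p.Prime).pos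
  set t := PowerSeries.trunc (n + 1) f with ht
  have hagree : ∀ m ≤ n, PowerSeries.coeff (R := R) m f = PowerSeries.coeff (R := R) m (t : PowerSeries R) := by
    intro m hm
    rw [Polynomial.coeff_coe, ht, PowerSeries.coeff_trunc, if_pos (by omega)]
  have key := coeff_pow_agree f (t : PowerSeries R) n hagree p n le_rfl
  rw [key, ← Polynomial.coe_pow, ← Polynomial.map_frobenius_expand p t, Polynomial.coeff_coe,
    Polynomial.coeff_map, Polynomial.coeff_expand hp]
  split_ifs with h
  · rw [frobenius_def, ht, PowerSeries.coeff_trunc,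
      if_pos (Nat.lt_succ_of_le (Nat.div_le_self n p))]
  · exact map_zero _

lemma coeff_pow_char_pow {R : Type*} [CommRing R] (p : ℕ) [Fact p.Prime] [CharP R p]
    (f : PowerSeries R) (r n : ℕ) :
    PowerSeries.coeff (R := R) n (f ^ p ^ r) =
      if p ^ r ∣ n then (PowerSeries.coeff (R := R) (n / p ^ r) f) ^ p ^ r else 0 := by
  have hp : 0 < p := (Fact.out : p.Prime).pos
  induction r generalizing f n with
  | zero => simp
  | succ r ih =>
    have hfp : f ^ p ^ (r + 1) = (f ^ p) ^ p ^ r := by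
      rw [← pow_mul, pow_succ, mul_comm]
    rw [hfp, ih]
    by_cases h1 : p ^ r ∣ n
    · rw [if_pos h1, coeff_pow_char]
      by_cases h2 : p ∣ n / p ^ r
      · rw [if_pos h2]
        have hdvd : p ^ (r + 1) ∣ n := by
          rw [pow_succ]
          exact (Nat.dvd_div_iff_mul_dvd h1).mp h2
        rw [if_pos hdvd, Nat.div_div_eq_div_mul, ← pow_succ, ← pow_mul, ← pow_succ']
      · rw [if_neg h2, zero_pow (pow_ne_zero r hp.ne'), if_neg]
        intro hdvd
        exact h2 ((Nat.dvd_div_iff_mul_dvd h1).mpr (by rwa [← pow_succ]))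
    · rw [if_neg h1, if_neg fun hdvd => h1 (dvd_trans (pow_dvd_pow p (Nat.le_succ r)) hdvd)]

lemma thetaRat_pow_injective (p : ℕ) [Fact p.Prime] :
    Function.Injective fun n : ℕ => thetaRat p ^ n := by
  intro a b hab
  simp only [thetaRat, ← RatFunc.algebraMap_X, ← map_pow] at hab
  have h1 := RatFunc.algebraMap_injective (ZMod p) hab
  have h2 := congrArg Polynomial.natDegree h1
  simpa using h2

lemma carlitzD_ne_zero (p : ℕ) [Fact p.Prime] (r i : ℕ) (hr : 0 < r) :
    carlitzD p r i ≠ 0 := by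
  have hp2 : 2 ≤ p := (Fact.out : p.Prime).two_le
  refine Finset.prod_ne_zero_iff.mpr fun j hj => ?_
  rw [Finset.mem_range] at hj
  rw [sub_ne_zero]
  intro h
  have h1 := thetaRat_pow_injective p h
  have h2 : r * i = r * j := Nat.pow_right_injective hp2 h1
  have h3 : r * j < r * i := (Nat.mul_lt_mul_left hr).mpr hj
  omega

lemma pow_rmul_injective (p : ℕ) [Fact p.Prime] (r : ℕ) (hr : 0 < r) :
    Function.Injective fun i : ℕ => p ^ (r * i) := by
  have hp2 : 2 ≤ p := (Fact.out : p.Prime).two_le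
  intro a b hab
  simp only [pow_mul] at hab
  exact Nat.pow_right_injective (Nat.one_lt_pow hr.ne' hp2) hab

lemma coeff_carlitzExp (p : ℕ) [Fact p.Prime] (r : ℕ) (hr : 0 < r) (i : ℕ) :
    PowerSeries.coeff (R := kRat p) (p ^ (r * i)) (carlitzExp p r) = (carlitzD p r i)⁻¹ := by
  rw [carlitzExp, PowerSeries.coeff_mk]
  have h : ∃ j, p ^ (r * j) = p ^ (r * i) := ⟨i, rfl⟩
  rw [dif_pos h, show h.choose = i from pow_rmul_injective p r hr h.choose_spec]

lemma coeff_carlitzExp_zero (p : ℕ) [Fact p.Prime] (r n : ℕ)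
    (h : ¬∃ i, p ^ (r * i) = n) :
    PowerSeries.coeff (R := kRat p) n (carlitzExp p r) = 0 := by
  rw [carlitzExp, PowerSeries.coeff_mk, dif_neg h]

lemma carlitzD_succ (p : ℕ) [Fact p.Prime] (r i : ℕ) :
    carlitzD p r (i + 1) =
      (thetaRat p ^ p ^ (r * (i + 1)) - thetaRat p) * (carlitzD p r i) ^ p ^ r := by
  rw [carlitzD, Finset.prod_range_succ', mul_comm]
  congr 1
  · simp
  · rw [carlitzD, ← Finset.prod_pow]
    refine Finset.prod_congr rfl fun j _ => ?_
    rw [sub_pow_char_pow]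
    congr 1 <;> rw [← pow_mul, ← pow_add] <;> congr 1 <;> ring

/-- In `𝔽_p(θ)[[z]]`, the Carlitz exponential satisfies the functional
equation `exp_{C_r}(θ·z) = θ·exp_{C_r}(z) + (exp_{C_r}(z))^{p^r}`, where `exp_{C_r}(θ·z)`
is obtained by substituting `θ·z` for `z` (i.e. rescaling by `θ`). -/
theorem carlitzExp_functional_equation (p : ℕ) [Fact p.Prime] (r : ℕ) (hr : 0 < r) :
    PowerSeries.rescale (thetaRat p) (carlitzExp p r) =
      PowerSeries.C (R := kRat p) (thetaRat p) * carlitzExp p r + carlitzExp p r ^ p ^ r := by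
  have hp : 0 < p := (Fact.out : p.Prime).pos
  have hpr1 : 1 < p ^ r := Nat.one_lt_pow hr.ne' (Fact.out : p.Prime).two_le
  ext n
  rw [PowerSeries.coeff_rescale, map_add, PowerSeries.coeff_C_mul, coeff_pow_char_pow]
  by_cases h : ∃ i, p ^ (r * i) = n
  · obtain ⟨i, rfl⟩ := h
    cases i with
    | zero =>
      have h1 : PowerSeries.coeff (R := kRat p) 1 (carlitzExp p r) = 1 := by
        have h0 := coeff_carlitzExp p r hr 0
        simpa [carlitzD] using h0
      simp only [Nat.mul_zero, pow_zero, pow_one, h1]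
      rw [if_neg (fun hd => by have := Nat.le_of_dvd one_pos hd; omega)]
      ring
    | succ m =>
      have hdvd : p ^ r ∣ p ^ (r * (m + 1)) :=
        ⟨p ^ (r * m), by rw [← pow_add]; congr 1; ring⟩
      have hdiv : p ^ (r * (m + 1)) / p ^ r = p ^ (r * m) := by
        rw [show r * (m + 1) = r * m + r by ring, pow_add,
          Nat.mul_div_cancel _ (pow_pos hp r)]
      rw [if_pos hdvd, hdiv, coeff_carlitzExp p r hr, coeff_carlitzExp p r hr]
      have hD1 : carlitzD p r (m + 1) ≠ 0 := carlitzD_ne_zero p r (m + 1) hr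
      have hDm : carlitzD p r m ≠ 0 := carlitzD_ne_zero p r m hr
      have hsub : thetaRat p ^ p ^ (r * (m + 1)) - thetaRat p ≠ 0 := by
        rw [sub_ne_zero]
        intro hh
        have h2 := thetaRat_pow_injective p (a₁ := p ^ (r * (m + 1))) (a₂ := 1)
          (by simpa using hh)
        have h3 : 1 < p ^ (r * (m + 1)) :=
          Nat.one_lt_pow (by positivity) (Fact.out : p.Prime).one_lt
        omega
      rw [carlitzD_succ]
      field_simp
      have hq : carlitzD p r m ^ p ^ r * (carlitzD p r m)⁻¹ ^ p ^ r = 1 := by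
        rw [← mul_pow, mul_inv_cancel₀ hDm, one_pow]
      linear_combination (thetaRat p - thetaRat p ^ p ^ (r * (m + 1))) * hq
  · rw [coeff_carlitzExp_zero p r n h]
    by_cases hdvd : p ^ r ∣ n
    · rw [if_pos hdvd]
      have hz : PowerSeries.coeff (R := kRat p) (n / p ^ r) (carlitzExp p r) = 0 := by
        apply coeff_carlitzExp_zero
        rintro ⟨j, hj⟩
        exact h ⟨j + 1, by
          rw [show r * (j + 1) = r * j + r by ring, pow_add, hj, Nat.div_mul_cancel hdvd]⟩
      rw [hz, zero_pow (pow_ne_zero r hp.ne')]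
      simp
    · rw [if_neg hdvd]
      simp
end
end
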